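/- For all n ≥ 1, t(n) ≤ √(3n); equivalently, t(n)² ≤ 3n. -/
import Mathlib

def rs : ℕ → ℤ
  | 0 => 1
  | (n+1) =>
    if (n+1) % 2 = 0 then rs ((n+1)/2)
    else (-1)^((n+1)/2) * rs ((n+1)/2)
decreasing_by all_goals exact Nat.div_lt_self (Nat.succ_pos n) (by norm_num)

def s (n : ℕ) : ℤ := ∑ i ∈ Finset.range (n+1), rs i

def t (n : ℕ) : ℤ := ∑ i ∈ Finset.range (n+1), (-1)^i * rs i

lemma rs_succ (n : ℕ) : rs (n+1) =
    if (n+1) % 2 = 0 then rs ((n+1)/2) else (-1)^((n+1)/2) * rs ((n+1)/2) := by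
  rw [rs]

lemma rs_even (k : ℕ) : rs (2*k) = rs k := by
  cases k with
  | zero => rfl
  | succ j =>
    have h : 2*(j+1) = (2*j+1)+1 := by ring
    rw [h, rs_succ]
    have h1 : (2*j+1+1) % 2 = 0 := by omega
    have h2 : (2*j+1+1) / 2 = j+1 := by omega
    rw [h1, h2]
    simp

lemma rs_odd (k : ℕ) : rs (2*k+1) = (-1)^k * rs k := by
  rw [rs_succ]
  have h1 : (2*k+1) % 2 = 1 := by omega
  have h2 : (2*k+1) / 2 = k := by omega
  rw [h1, h2]
  simp

lemma rs_pm (n : ℕ) : rs n = 1 ∨ rs n = -1 := by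
  induction n using Nat.strong_induction_on with
  | _ n ih =>
    cases n with
    | zero => left; rw [rs]
    | succ m =>
      rw [rs_succ]
      have hlt : (m+1)/2 < m+1 := Nat.div_lt_self (Nat.succ_pos m) (by norm_num)
      rcases ih _ hlt with h | h <;> rcases Nat.even_or_odd ((m+1)/2) with hp | hp <;>
        split <;> simp [h, hp.neg_one_pow]

lemma s_succ (n : ℕ) : s (n+1) = s n + rs (n+1) := by
  simp [s, Finset.sum_range_succ]

lemma t_succ (n : ℕ) : t (n+1) = t n + (-1)^(n+1) * rs (n+1) := by
  simp [t, Finset.sum_range_succ]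

lemma s_odd (k : ℕ) : s (2*k+1) = s k + t k := by
  induction k with
  | zero => simp [s, t, Finset.sum_range_succ, rs_succ]
  | succ j ihj =>
    have h1 : 2*(j+1)+1 = (2*j+1) + 1 + 1 := by ring
    rw [h1]
    rw [show s ((2*j+1)+1+1) = s (2*j+1) + rs (2*j+1+1) + rs (2*j+1+1+1) by
      simp [s, Finset.sum_range_succ]]
    rw [ihj]
    rw [show 2*j+1+1 = 2*(j+1) by ring, show 2*(j+1)+1 = 2*(j+1)+1 from rfl]
    rw [rs_even, rs_odd]
    rw [s_succ, t_succ]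
    ring

lemma t_odd (k : ℕ) : t (2*k+1) = s k - t k := by
  induction k with
  | zero => simp [s, t, Finset.sum_range_succ, rs_succ]
  | succ j ihj =>
    have h1 : 2*(j+1)+1 = (2*j+1) + 1 + 1 := by ring
    rw [h1]
    rw [show t ((2*j+1)+1+1) = t (2*j+1) + (-1)^(2*j+1+1) * rs (2*j+1+1)
        + (-1)^(2*j+1+1+1) * rs (2*j+1+1+1) by
      simp [t, Finset.sum_range_succ]]
    rw [ihj]
    rw [show 2*j+1+1 = 2*(j+1) by ring, show 2*(j+1)+1 = 2*(j+1)+1 from rfl]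
    rw [rs_even, rs_odd]
    rw [s_succ, t_succ]
    have p1 : ((-1:ℤ))^(2*(j+1)) = 1 := by
      rw [pow_mul]; norm_num
    have p2 : ((-1:ℤ))^(2*(j+1)+1) = -1 := by
      rw [pow_succ, p1]; ring
    rw [p1, p2]
    have p3 : ((-1:ℤ))^(j+1) = -(-1:ℤ)^j := by rw [pow_succ]; ring
    rw [p3]
    ring

lemma s_even (k : ℕ) : s (2*k) = s k + t k - (-1)^k * rs k := by
  have h := s_odd k
  rw [show 2*k+1 = (2*k)+1 from rfl, s_succ, show (2*k)+1 = 2*k+1 from rfl, rs_odd] at h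
  linarith

lemma t_even (k : ℕ) : t (2*k) = s k - t k + (-1)^k * rs k := by
  have h := t_odd k
  rw [show 2*k+1 = (2*k)+1 from rfl, t_succ, show (2*k)+1 = 2*k+1 from rfl, rs_odd] at h
  have p2 : ((-1:ℤ))^(2*k+1) = -1 := by
    rw [pow_succ, pow_mul]; norm_num
  rw [p2] at h
  linarith
def P (m : ℕ) : Prop :=
  0 ≤ t m ∧ t m ≤ s m ∧ 2 ≤ s m ∧
  (m % 2 = 0 → 1 ≤ t m) ∧
  ((-1:ℤ)^m * rs m = -1 → t m + 2 ≤ s m) ∧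
  (m % 2 = 0 → (-1:ℤ)^m * rs m = 1 →
    (s m)^2 + (t m)^2 - 2*(t m) + 2*(s m) ≤ 6*(m:ℤ)+2) ∧
  (m % 2 = 1 → (-1:ℤ)^m * rs m = 1 →
    2 ≤ t m ∧ (s m)^2 + (t m)^2 - 2*(t m) + 2*(s m) ≤ 6*(m:ℤ)-10) ∧
  (m % 2 = 0 → (-1:ℤ)^m * rs m = -1 →
    (s m)^2 + (t m)^2 + 2*(t m) + 2*(s m) ≤ 6*(m:ℤ)-10) ∧
  (m % 2 = 1 → (-1:ℤ)^m * rs m = -1 →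
    (s m)^2 + (t m)^2 + 4*(t m) ≤ 6*(m:ℤ)-2)

lemma rs_zero : rs 0 = 1 := by rw [rs]

lemma rs_one : rs 1 = 1 := by rw [rs_succ]; norm_num [rs_zero]

lemma s_one : s 1 = 2 := by simp [s, Finset.sum_range_succ, rs_zero, rs_one]

lemma t_one : t 1 = 0 := by simp [t, Finset.sum_range_succ, rs_zero, rs_one]

set_option maxHeartbeats 1000000 in
lemma P_one : P 1 := by
  have hE : (-1:ℤ)^1 * rs 1 = -1 := by rw [rs_one]; ring
  refine ⟨?_, ?_, ?_, ?_, ?_, ?_, ?_, ?_, ?_⟩ <;>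
    simp only [s_one, t_one, hE] <;> norm_num

set_option maxHeartbeats 2000000 in
lemma P_step (k : ℕ) (hk : 1 ≤ k) (h : P k) : P (2*k) ∧ P (2*k+1) := by
  obtain ⟨hv0, hvu, hu2, h4, h5, h6, h7, h8, h9⟩ := h
  have hs0 := s_even k
  have ht0 := t_even k
  have hs1 := s_odd k
  have ht1 := t_odd k
  have hp2k : ((-1:ℤ))^(2*k) = 1 := by rw [pow_mul]; norm_num
  have hp2k1 : ((-1:ℤ))^(2*k+1) = -1 := by rw [pow_succ, hp2k]; ring
  have hrs2k : rs (2*k) = rs k := rs_even k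
  have hrs2k1 : rs (2*k+1) = (-1)^k * rs k := rs_odd k
  have hm0 : (2*k) % 2 = 0 := by omega
  have hm1 : (2*k+1) % 2 = 1 := by omega
  have hcast : ((2*k : ℕ) : ℤ) = 2*(k:ℤ) := by push_cast; ring
  have hcast1 : ((2*k+1 : ℕ) : ℤ) = 2*(k:ℤ)+1 := by push_cast; ring
  have hepm : (-1:ℤ)^k * rs k = 1 ∨ (-1:ℤ)^k * rs k = -1 := by
    rcases rs_pm k with h | h <;> rcases Nat.even_or_odd k with hp | hp <;>
      simp [h, hp.neg_one_pow]
  rcases Nat.even_or_odd k with hpar | hpar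
  · -- k even
    have hpk : ((-1:ℤ))^k = 1 := hpar.neg_one_pow
    have hk2 : k % 2 = 0 := Nat.even_iff.mp hpar
    have hv1 : 1 ≤ t k := h4 hk2
    rcases hepm with he | he
    · -- branch 1 : e = 1
      have hrs : rs k = 1 := by rw [hpk, one_mul] at he; exact he
      have hq := h6 hk2 he
      have hs2 : s (2*k) = s k + t k - 1 := by rw [hs0, hpk, hrs]; ring
      have ht2 : t (2*k) = s k - t k + 1 := by rw [ht0, hpk, hrs]; ring
      have hE2 : (-1:ℤ)^(2*k) * rs (2*k) = 1 := by rw [hp2k, hrs2k, hrs]; ring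
      have hE3 : (-1:ℤ)^(2*k+1) * rs (2*k+1) = -1 := by
        rw [hp2k1, hrs2k1, hpk, hrs]; ring
      constructor
      · refine ⟨?_, ?_, ?_, ?_, ?_, ?_, ?_, ?_, ?_⟩
        · rw [ht2]; linarith
        · rw [ht2, hs2]; linarith
        · rw [hs2]; linarith
        · intro _; rw [ht2]; linarith
        · intro hh; rw [hE2] at hh; norm_num at hh
        · intro _ _; rw [hs2, ht2, hcast]; nlinarith [hq]
        · intro hh; exact absurd hh (by omega)
        · intro _ hh; rw [hE2] at hh; norm_num at hh
        · intro hh; exact absurd hh (by omega)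
      · refine ⟨?_, ?_, ?_, ?_, ?_, ?_, ?_, ?_, ?_⟩
        · rw [ht1]; linarith
        · rw [ht1, hs1]; linarith
        · rw [hs1]; linarith
        · intro hh; exact absurd hh (by omega)
        · intro _; rw [ht1, hs1]; linarith
        · intro hh; exact absurd hh (by omega)
        · intro _ hh; rw [hE3] at hh; norm_num at hh
        · intro hh; exact absurd hh (by omega)
        · intro _ _; rw [hs1, ht1, hcast1]; nlinarith [hq]
    · -- branch 2 : e = -1
      have hrs : rs k = -1 := by rw [hpk, one_mul] at he; exact he
      have hgap : t k + 2 ≤ s k := h5 he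
      have hq := h8 hk2 he
      have hs2 : s (2*k) = s k + t k + 1 := by rw [hs0, hpk, hrs]; ring
      have ht2 : t (2*k) = s k - t k - 1 := by rw [ht0, hpk, hrs]; ring
      have hE2 : (-1:ℤ)^(2*k) * rs (2*k) = -1 := by rw [hp2k, hrs2k, hrs]; ring
      have hE3 : (-1:ℤ)^(2*k+1) * rs (2*k+1) = 1 := by
        rw [hp2k1, hrs2k1, hpk, hrs]; ring
      constructor
      · refine ⟨?_, ?_, ?_, ?_, ?_, ?_, ?_, ?_, ?_⟩
        · rw [ht2]; linarith
        · rw [ht2, hs2]; linarith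
        · rw [hs2]; linarith
        · intro _; rw [ht2]; linarith
        · intro _; rw [ht2, hs2]; linarith
        · intro _ hh; rw [hE2] at hh; norm_num at hh
        · intro hh; exact absurd hh (by omega)
        · intro _ _; rw [hs2, ht2, hcast]; nlinarith [hq]
        · intro hh; exact absurd hh (by omega)
      · refine ⟨?_, ?_, ?_, ?_, ?_, ?_, ?_, ?_, ?_⟩
        · rw [ht1]; linarith
        · rw [ht1, hs1]; linarith
        · rw [hs1]; linarith
        · intro hh; exact absurd hh (by omega)
        · intro hh; rw [hE3] at hh; norm_num at hh
        · intro hh; exact absurd hh (by omega)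
        · intro _ _
          constructor
          · rw [ht1]; linarith
          · rw [hs1, ht1, hcast1]; nlinarith [hq]
        · intro hh; exact absurd hh (by omega)
        · intro _ hh; rw [hE3] at hh; norm_num at hh
  · -- k odd
    have hpk : ((-1:ℤ))^k = -1 := hpar.neg_one_pow
    have hk2 : k % 2 = 1 := Nat.odd_iff.mp hpar
    rcases hepm with he | he
    · -- branch 3 : e = 1
      have hrs : rs k = -1 := by rw [hpk] at he; linarith
      obtain ⟨hv2, hq⟩ := h7 hk2 he
      have hs2 : s (2*k) = s k + t k - 1 := by rw [hs0, hpk, hrs]; ring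
      have ht2 : t (2*k) = s k - t k + 1 := by rw [ht0, hpk, hrs]; ring
      have hE2 : (-1:ℤ)^(2*k) * rs (2*k) = -1 := by rw [hp2k, hrs2k, hrs]; ring
      have hE3 : (-1:ℤ)^(2*k+1) * rs (2*k+1) = -1 := by
        rw [hp2k1, hrs2k1, hpk, hrs]; ring
      constructor
      · refine ⟨?_, ?_, ?_, ?_, ?_, ?_, ?_, ?_, ?_⟩
        · rw [ht2]; linarith
        · rw [ht2, hs2]; linarith
        · rw [hs2]; linarith
        · intro _; rw [ht2]; linarith
        · intro _; rw [ht2, hs2]; linarith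
        · intro _ hh; rw [hE2] at hh; norm_num at hh
        · intro hh; exact absurd hh (by omega)
        · intro _ _; rw [hs2, ht2, hcast]; nlinarith [hq]
        · intro hh; exact absurd hh (by omega)
      · refine ⟨?_, ?_, ?_, ?_, ?_, ?_, ?_, ?_, ?_⟩
        · rw [ht1]; linarith
        · rw [ht1, hs1]; linarith
        · rw [hs1]; linarith
        · intro hh; exact absurd hh (by omega)
        · intro _; rw [ht1, hs1]; linarith
        · intro hh; exact absurd hh (by omega)
        · intro _ hh; rw [hE3] at hh; norm_num at hh
        · intro hh; exact absurd hh (by omega)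
        · intro _ _; rw [hs1, ht1, hcast1]; nlinarith [hq]
    · -- branch 4 : e = -1
      have hrs : rs k = 1 := by rw [hpk] at he; linarith
      have hgap : t k + 2 ≤ s k := h5 he
      have hq := h9 hk2 he
      have hs2 : s (2*k) = s k + t k + 1 := by rw [hs0, hpk, hrs]; ring
      have ht2 : t (2*k) = s k - t k - 1 := by rw [ht0, hpk, hrs]; ring
      have hE2 : (-1:ℤ)^(2*k) * rs (2*k) = 1 := by rw [hp2k, hrs2k, hrs]; ring
      have hE3 : (-1:ℤ)^(2*k+1) * rs (2*k+1) = 1 := by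
        rw [hp2k1, hrs2k1, hpk, hrs]; ring
      constructor
      · refine ⟨?_, ?_, ?_, ?_, ?_, ?_, ?_, ?_, ?_⟩
        · rw [ht2]; linarith
        · rw [ht2, hs2]; linarith
        · rw [hs2]; linarith
        · intro _; rw [ht2]; linarith
        · intro hh; rw [hE2] at hh; norm_num at hh
        · intro _ _; rw [hs2, ht2, hcast]; nlinarith [hq]
        · intro hh; exact absurd hh (by omega)
        · intro _ hh; rw [hE2] at hh; norm_num at hh
        · intro hh; exact absurd hh (by omega)
      · refine ⟨?_, ?_, ?_, ?_, ?_, ?_, ?_, ?_, ?_⟩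
        · rw [ht1]; linarith
        · rw [ht1, hs1]; linarith
        · rw [hs1]; linarith
        · intro hh; exact absurd hh (by omega)
        · intro hh; rw [hE3] at hh; norm_num at hh
        · intro hh; exact absurd hh (by omega)
        · intro _ _
          constructor
          · rw [ht1]; linarith
          · rw [hs1, ht1, hcast1]; nlinarith [hq]
        · intro hh; exact absurd hh (by omega)
        · intro _ hh; rw [hE3] at hh; norm_num at hh

lemma P_all : ∀ m : ℕ, 1 ≤ m → P m := by
  intro m
  induction m using Nat.strong_induction_on with
  | _ m ih =>
    intro hm
    rcases eq_or_lt_of_le hm with h1 | h1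
    · rw [← h1]; exact P_one
    · have hk : 1 ≤ m / 2 := by omega
      have hlt : m / 2 < m := by omega
      have hp := P_step (m/2) hk (ih _ hlt hk)
      rcases Nat.mod_two_eq_zero_or_one m with h2 | h2
      · have hme : m = 2 * (m/2) := by omega
        rw [hme]; exact hp.1
      · have hme : m = 2 * (m/2) + 1 := by omega
        rw [hme]; exact hp.2

set_option maxHeartbeats 1000000 in
theorem stmt19 : ∀ n : ℕ, 1 ≤ n → (t n)^2 ≤ 3 * n := by
  intro n hn
  rcases eq_or_lt_of_le hn with h1 | h1
  · rw [← h1, t_one]; norm_num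
  · have hk1 : 1 ≤ n / 2 := by omega
    set k := n / 2 with hkdef
    obtain ⟨hv0, hvu, hu2, h4, h5, h6, h7, h8, h9⟩ := P_all k hk1
    have hepm : (-1:ℤ)^k * rs k = 1 ∨ (-1:ℤ)^k * rs k = -1 := by
      rcases rs_pm k with h | h <;> rcases Nat.even_or_odd k with hp | hp <;>
        simp [h, hp.neg_one_pow]
    have huv0 : (0:ℤ) ≤ s k * t k := mul_nonneg (by linarith) hv0
    rcases Nat.mod_two_eq_zero_or_one n with h2 | h2
    · -- n = 2k
      have hme : n = 2 * k := by omega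
      rw [hme, t_even]
      have hcast : ((2*k : ℕ) : ℤ) = 2*(k:ℤ) := by push_cast; ring
      rw [hcast]
      rcases Nat.even_or_odd k with hpar | hpar
      · have hpk : ((-1:ℤ))^k = 1 := hpar.neg_one_pow
        have hk2 : k % 2 = 0 := Nat.even_iff.mp hpar
        have hv1 : 1 ≤ t k := h4 hk2
        rcases hepm with he | he
        · have hrs : rs k = 1 := by rw [hpk, one_mul] at he; exact he
          have hq := h6 hk2 he
          rw [hpk, hrs]
          have hprod : (0:ℤ) ≤ (s k - 2) * (t k - 1) :=
            mul_nonneg (by linarith) (by linarith)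
          nlinarith [hq, hprod]
        · have hrs : rs k = -1 := by rw [hpk, one_mul] at he; exact he
          have hq := h8 hk2 he
          rw [hpk, hrs]
          nlinarith [hq, huv0]
      · have hpk : ((-1:ℤ))^k = -1 := hpar.neg_one_pow
        have hk2 : k % 2 = 1 := Nat.odd_iff.mp hpar
        rcases hepm with he | he
        · have hrs : rs k = -1 := by rw [hpk] at he; linarith
          obtain ⟨hv2, hq⟩ := h7 hk2 he
          rw [hpk, hrs]
          nlinarith [hq, huv0]
        · have hrs : rs k = 1 := by rw [hpk] at he; linarith
          have hq := h9 hk2 he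
          rw [hpk, hrs]
          nlinarith [hq, huv0]
    · -- n = 2k+1
      have hme : n = 2 * k + 1 := by omega
      rw [hme, t_odd]
      have hcast : ((2*k+1 : ℕ) : ℤ) = 2*(k:ℤ)+1 := by push_cast; ring
      rw [hcast]
      rcases Nat.even_or_odd k with hpar | hpar
      · have hk2 : k % 2 = 0 := Nat.even_iff.mp hpar
        rcases hepm with he | he
        · have hq := h6 hk2 he
          nlinarith [hq, huv0]
        · have hq := h8 hk2 he
          nlinarith [hq, huv0]
      · have hk2 : k % 2 = 1 := Nat.odd_iff.mp hpar
        rcases hepm with he | he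
        · obtain ⟨hv2, hq⟩ := h7 hk2 he
          nlinarith [hq, huv0]
        · have hq := h9 hk2 he
          nlinarith [hq, huv0]
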